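/- Let G be a finite group and x ∈ G an element of prime order p. If G = ⟨ N_G(A) : A an abelian subgroup of G with x ∈ A ⟩, then the commuting graph on the conjugacy class x^G is connected. -/

import Mathlib

open SimpleGraph

/-- The commuting graph on a subset `X` of a group `G`: vertices are the elements of `X`,
and two distinct vertices are adjacent iff they commute. -/
def commGraph {G : Type*} [Group G] (X : Set G) : SimpleGraph X where
  Adj a b := a ≠ b ∧ (a : G) * (b : G) = (b : G) * (a : G)
  symm := ⟨fun a b h => ⟨h.1.symm, h.2.symm⟩⟩
  loopless := ⟨fun a h => h.1 rfl⟩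

/-- The connected component of `x` in the commuting graph on `X`, viewed as a subset of `G`. -/
def compSet {G : Type*} [Group G] (X : Set G) (x : G) (hx : x ∈ X) : Set G :=
  {y : G | ∃ hy : y ∈ X, (commGraph X).Reachable ⟨x, hx⟩ ⟨y, hy⟩}

/-- The stabilizer `H_x` in `G` of the connected component of `x` in the commuting graph on `X`,
under the conjugation action. -/
def conjStab {G : Type*} [Group G] (X : Set G) (x : G) (hx : x ∈ X) : Set G :=
  {g : G | (fun y => g⁻¹ * y * g) '' compSet X x hx = compSet X x hx}

/-- Let `G` be a finite group and `x` an element of prime order `p`. If `G` is generated by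
the normalizers of the abelian subgroups containing `x`, then the commuting graph on the
conjugacy class `x^G` is connected. -/
theorem commGraph_conjClass_connected_of_abelian_normalizers
    {G : Type*} [Group G] [Finite G] (p : ℕ) (hp : p.Prime)
    (x : G) (hx : orderOf x = p)
    (hgen : (⨆ A ∈ {A : Subgroup G | x ∈ A ∧ ∀ a ∈ A, ∀ b ∈ A, a * b = b * a},
        Subgroup.normalizer (A : Set G)) = ⊤) :
    (commGraph {y : G | IsConj x y}).Connected := by
  classical
  set X : Set G := {y : G | IsConj x y} with hXdef
  have hxX : x ∈ X := IsConj.refl x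
  have hconjmem : ∀ (g : G) {y : G}, y ∈ X → g⁻¹ * y * g ∈ X := by
    intro g y hy
    exact hy.trans (isConj_iff.2 ⟨g⁻¹, by group⟩)
  -- conjugation preserves reachability
  have hreach : ∀ (g : G) (u v : X), (commGraph X).Reachable u v →
      (commGraph X).Reachable ⟨g⁻¹ * u * g, hconjmem g u.2⟩ ⟨g⁻¹ * v * g, hconjmem g v.2⟩ := by
    intro g u v h
    let f : commGraph X →g commGraph X :=
      { toFun := fun y => ⟨g⁻¹ * y * g, hconjmem g y.2⟩
        map_rel' := by
          rintro a b ⟨hne, hcomm⟩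
          refine ⟨?_, ?_⟩
          · intro hab
            apply hne
            have h2 : g⁻¹ * (a : G) * g = g⁻¹ * (b : G) * g := congrArg Subtype.val hab
            have : (a : G) = b := by
              have := mul_right_cancel h2
              exact mul_left_cancel this
            exact Subtype.ext this
          · show g⁻¹ * (a:G) * g * (g⁻¹ * b * g) = g⁻¹ * (b:G) * g * (g⁻¹ * a * g)
            calc g⁻¹ * (a:G) * g * (g⁻¹ * b * g) = g⁻¹ * ((a:G) * b) * g := by group
              _ = g⁻¹ * ((b:G) * a) * g := by rw [hcomm]
              _ = g⁻¹ * (b:G) * g * (g⁻¹ * a * g) := by group }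
    exact h.map f
  have hxC : x ∈ compSet X x hxX := ⟨hxX, Reachable.refl _⟩
  -- the stabilizer subgroup
  let H : Subgroup G :=
    { carrier := {g : G | g⁻¹ * x * g ∈ compSet X x hxX}
      one_mem' := by simpa using hxC
      mul_mem' := by
        intro g h hg hh
        obtain ⟨hg1, hg2⟩ := hg
        obtain ⟨hh1, hh2⟩ := hh
        have h3 := hreach h ⟨x, hxX⟩ ⟨g⁻¹ * x * g, hg1⟩ hg2
        have key : (g * h)⁻¹ * x * (g * h) = h⁻¹ * (g⁻¹ * x * g) * h := by group
        show (g * h)⁻¹ * x * (g * h) ∈ compSet X x hxX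
        rw [key]
        exact ⟨hconjmem h hg1, hh2.trans h3⟩
      inv_mem' := by
        intro g hg
        obtain ⟨hg1, hg2⟩ := hg
        have h3 := hreach g⁻¹ ⟨x, hxX⟩ ⟨g⁻¹ * x * g, hg1⟩ hg2
        have key : (g⁻¹)⁻¹ * (g⁻¹ * x * g) * g⁻¹ = x := by group
        show (g⁻¹)⁻¹ * x * g⁻¹ ∈ compSet X x hxX
        have h4 : (commGraph X).Reachable ⟨(g⁻¹)⁻¹ * x * g⁻¹, hconjmem g⁻¹ hxX⟩ ⟨x, hxX⟩ := by
          convert h3 using 2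
          exact key.symm
        exact ⟨hconjmem g⁻¹ hxX, h4.symm⟩ }
  have hHtop : ∀ g : G, g⁻¹ * x * g ∈ compSet X x hxX := by
    have : H = ⊤ := by
      rw [← top_le_iff, ← hgen]
      apply iSup_le
      intro A
      apply iSup_le
      rintro ⟨hxA, hab⟩ g hgA
      have hmem : g⁻¹ * x * g ∈ A := by
        have := (Subgroup.mem_normalizer_iff.1 hgA (g⁻¹ * x * g)).2
        have h2 : g * (g⁻¹ * x * g) * g⁻¹ = x := by group
        apply (Subgroup.mem_normalizer_iff.1 hgA (g⁻¹ * x * g)).2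
        rw [h2]; exact hxA
      have hcomm : x * (g⁻¹ * x * g) = (g⁻¹ * x * g) * x := hab x hxA _ hmem
      show g⁻¹ * x * g ∈ compSet X x hxX
      by_cases heq : g⁻¹ * x * g = x
      · rw [heq]; exact hxC
      · exact ⟨hconjmem g hxX, Adj.reachable ⟨fun hc => heq ((congrArg Subtype.val hc).symm), hcomm⟩⟩
    intro g
    have : g ∈ H := by rw [this]; trivial
    exact this
  have hreachAll : ∀ u : X, (commGraph X).Reachable ⟨x, hxX⟩ u := by
    intro u
    obtain ⟨g, hg⟩ := isConj_iff.1 u.2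
    obtain ⟨h1, h2⟩ := hHtop g⁻¹
    have key : (g⁻¹)⁻¹ * x * g⁻¹ = (u : G) := by rw [← hg]; group
    have hequ : (⟨(g⁻¹)⁻¹ * x * g⁻¹, h1⟩ : X) = u := Subtype.ext key
    rw [← hequ]
    exact h2
  have : Nonempty X := ⟨⟨x, hxX⟩⟩
  exact ⟨fun u v => (hreachAll u).symm.trans (hreachAll v)⟩
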